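/- Let p be an odd prime, n ≥ 2 an integer, and C an integer with n ≤ C ≤ p/n. Fix i, j with 0 ≤ i, j < n. Then the number of x with 1 ≤ x ≤ p-1, x ≡ i (mod n), and the least positive residue of C·x mod p congruent to j (mod n), is greater than p/(4n²). -/

import Mathlib

set_option maxHeartbeats 1000000

lemma one_le_ediv_aux (a d : ℤ) (hd : 0 < d) (hda : d ≤ a) : 1 ≤ a / d := by
  have h0 := Int.mul_ediv_add_emod a d
  have h2 := Int.emod_lt_of_pos a hd
  by_contra hcon
  push_neg at hcon
  have h3 : a / d ≤ 0 := by linarith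
  nlinarith [mul_nonneg hd.le (neg_nonneg.2 h3)]

lemma aux_div (a d : ℤ) (hd : 0 < d) (hda : d ≤ a) : a + 1 ≤ 2 * d * (a / d) := by
  have h0 := Int.mul_ediv_add_emod a d
  have h1 := Int.emod_nonneg a (ne_of_gt hd)
  have h2 := Int.emod_lt_of_pos a hd
  have hA : 1 ≤ a / d := one_le_ediv_aux a d hd hda
  rcases lt_or_ge a (2 * d) with h | h
  · nlinarith [mul_nonneg hd.le (by linarith : (0:ℤ) ≤ a / d - 1)]
  · linarith

theorem stmt_7 (p n C i j : ℤ) (hp : Prime p) (hodd : Odd p) (hn : 2 ≤ n)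
    (hC1 : n ≤ C) (hC2 : C * n ≤ p)
    (hi : 0 ≤ i) (hin : i < n) (hj : 0 ≤ j) (hjn : j < n) :
    p < 4 * n ^ 2 *
      (((Finset.Icc 1 (p - 1)).filter
          (fun x => x % n = i ∧ ((C * x) % p) % n = j)).card : ℤ) := by
  have hn0 : (0:ℤ) < n := by linarith
  have hC0 : (0:ℤ) < C := by linarith
  have hp0 : (0:ℤ) < p := by nlinarith
  have hd0 : (0:ℤ) < n * C := mul_pos hn0 hC0
  have hCn' : n * C ≤ p := by linarith
  set A := C / n with hAdef
  set B := p / (n * C) with hBdef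
  have hA1 : 1 ≤ A := one_le_ediv_aux C n hn0 hC1
  have hB1 : 1 ≤ B := one_le_ediv_aux p (n*C) hd0 hCn'
  have hq : p.natAbs.Prime := Int.prime_iff_natAbs_prime.mp hp
  have hpn : ¬ (p ∣ n) := by
    intro h
    have := Int.le_of_dvd hn0 h
    nlinarith [mul_pos hn0 (by linarith : (0:ℤ) < C - 1)]
  have hcop : IsCoprime p n := by
    rw [Int.isCoprime_iff_gcd_eq_one]
    exact (Nat.Prime.coprime_iff_not_dvd hq).2 (fun h => hpn (Int.natAbs_dvd_natAbs.mp h))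
  obtain ⟨a, b, hab⟩ := hcop
  -- t : block residue class
  set t := (a * (C*i - j)) % n with htdef
  have ht0 : 0 ≤ t := Int.emod_nonneg _ (ne_of_gt hn0)
  have htn : t < n := Int.emod_lt_of_pos _ hn0
  have htp' : p * t ≡ C*i - j [ZMOD n] := by
    have e1 : t ≡ a * (C*i - j) [ZMOD n] := Int.emod_emod_of_dvd _ dvd_rfl
    have e2 : p * t ≡ p * (a * (C*i - j)) [ZMOD n] := e1.mul_left p
    have e3 : p * (a * (C*i - j)) ≡ C*i - j [ZMOD n] := by
      refine Int.modEq_iff_dvd.mpr ⟨b * (C*i - j), ?_⟩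
      linear_combination (-(C*i - j)) * hab
    exact e2.trans e3
  -- n*C does not divide p
  have hndvd : ¬ ((n*C) ∣ p) := by
    intro h
    have hnp : n ∣ p := dvd_trans (dvd_mul_right n C) h
    have h1 : n.natAbs ∣ p.natAbs := Int.natAbs_dvd_natAbs.mpr hnp
    rcases hq.eq_one_or_self_of_dvd _ h1 with h2 | h2
    · omega
    · have hnep : n = p := by omega
      nlinarith [mul_pos hn0 (by linarith : (0:ℤ) < C - 1)]
  have hdB : n*C*B ≤ p - 1 := by
    have h0 := Int.mul_ediv_add_emod p (n*C)
    have h1 : p % (n*C) ≠ 0 := fun h => hndvd (Int.dvd_of_emod_eq_zero h)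
    have h2 := Int.emod_nonneg p (ne_of_gt hd0)
    have h3 : 0 < p % (n*C) := lt_of_le_of_ne h2 (Ne.symm h1)
    linarith
  have hnA : n * A ≤ C := by
    have h0 := Int.mul_ediv_add_emod C n
    have h2 := Int.emod_nonneg C (ne_of_gt hn0)
    linarith
  -- key block bounds
  have hblock : ∀ m k : ℤ, 0 ≤ m → m < A → 0 ≤ k → k < B →
      (t + n*m) * p < C * (i + n*(((t + n*m)*p - i*C)/(n*C) + 1 + k)) ∧
      C * (i + n*(((t + n*m)*p - i*C)/(n*C) + 1 + k)) < ((t + n*m) + 1) * p := by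
    intro m k hm0 hmA hk0 hkB
    set u := t + n*m with hu
    set w := u*p - i*C with hw
    set q := w / (n*C) with hqd
    have h0 := Int.mul_ediv_add_emod w (n*C)
    have h1 := Int.emod_nonneg w (ne_of_gt hd0)
    have h2 := Int.emod_lt_of_pos w hd0
    constructor
    · have hk' : 0 ≤ n*C*k := mul_nonneg hd0.le hk0
      nlinarith [h0, h2, hk']
    · have hk2 : n*C*k ≤ n*C*(B-1) := mul_le_mul_of_nonneg_left (by linarith) hd0.le
      nlinarith [h0, h1, hk2, hdB]
  -- membership
  have main : ∀ mk : ℤ × ℤ, mk ∈ Finset.Ico (0:ℤ) A ×ˢ Finset.Ico (0:ℤ) B →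
      (fun mk : ℤ × ℤ => i + n*(((t + n*mk.1)*p - i*C)/(n*C) + 1 + mk.2)) mk ∈
        Finset.filter (fun x => x % n = i ∧ ((C * x) % p) % n = j) (Finset.Icc 1 (p - 1)) := by
    rintro ⟨m, k⟩ hmk
    rw [Finset.mem_product, Finset.mem_Ico, Finset.mem_Ico] at hmk
    obtain ⟨⟨hm0, hmA⟩, hk0, hkB⟩ := hmk
    obtain ⟨hx1, hx2⟩ := hblock m k hm0 hmA hk0 hkB
    simp only
    set u := t + n*m with hu
    set q := (u*p - i*C)/(n*C) with hqd
    set x := i + n*(q + 1 + k) with hxdef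
    have hu0 : 0 ≤ u := by
      have : 0 ≤ n*m := mul_nonneg hn0.le hm0
      linarith
    have huC : u + 1 ≤ C := by
      have h5 : n*m ≤ n*(A-1) := mul_le_mul_of_nonneg_left (by linarith) hn0.le
      linarith [hnA, htn]
    have hup0 : 0 ≤ u * p := mul_nonneg hu0 hp0.le
    have hxpos : 1 ≤ x := by
      by_contra hcon
      push_neg at hcon
      have hx0 : x ≤ 0 := by linarith
      linarith [mul_nonneg hC0.le (neg_nonneg.2 hx0), hx1, hup0]
    have hxlt : x ≤ p - 1 := by
      have h1 : (u+1)*p ≤ C*p := mul_le_mul_of_nonneg_right huC hp0.le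
      have h2 : C*x < C*p := by linarith [hx2, h1]
      have h3 := lt_of_mul_lt_mul_left h2 hC0.le
      omega
    rw [Finset.mem_filter, Finset.mem_Icc]
    refine ⟨⟨hxpos, hxlt⟩, ?_, ?_⟩
    · rw [hxdef, Int.add_mul_emod_self_left, Int.emod_eq_of_lt hi hin]
    · have h5 : (C*x) % p = C*x - u*p := by
        conv_lhs => rw [show C*x = (C*x - u*p) + u*p by ring, Int.add_mul_emod_self_right]
        exact Int.emod_eq_of_lt (by nlinarith) (by nlinarith)
      rw [h5]
      obtain ⟨c, hc⟩ := Int.modEq_iff_dvd.mp htp'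
      have hfin : (C*x - u*p) % n = j % n := by
        have he : (C*x - u*p) - j = n * (C*(q+1+k) - m*p + c) := by
          rw [hxdef, hu]
          linear_combination hc
        have hd : n ∣ j - (C*x - u*p) := ⟨-(C*(q+1+k) - m*p + c), by linarith⟩
        exact Int.modEq_iff_dvd.mpr hd
      rw [hfin, Int.emod_eq_of_lt hj hjn]
  -- injectivity
  have hinj : Set.InjOn (fun mk : ℤ × ℤ => i + n*(((t + n*mk.1)*p - i*C)/(n*C) + 1 + mk.2))
      ↑(Finset.Ico (0:ℤ) A ×ˢ Finset.Ico (0:ℤ) B) := by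
    rintro ⟨m, k⟩ hmk ⟨m', k'⟩ hmk' heq
    rw [Finset.mem_coe, Finset.mem_product, Finset.mem_Ico, Finset.mem_Ico] at hmk hmk'
    obtain ⟨⟨hm0, hmA⟩, hk0, hkB⟩ := hmk
    obtain ⟨⟨hm0', hmA'⟩, hk0', hkB'⟩ := hmk'
    simp only at heq
    obtain ⟨hx1, hx2⟩ := hblock m k hm0 hmA hk0 hkB
    obtain ⟨hx1', hx2'⟩ := hblock m' k' hm0' hmA' hk0' hkB'
    have hCeq : C * (i + n*(((t + n*m)*p - i*C)/(n*C) + 1 + k))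
        = C * (i + n*(((t + n*m')*p - i*C)/(n*C) + 1 + k')) := by rw [heq]
    have hmm : m = m' := by
      by_contra hne
      rcases lt_or_gt_of_ne hne with h | h
      · have h1 : (t + n*m) + 1 ≤ t + n*m' := by
          nlinarith [mul_le_mul_of_nonneg_left (by linarith : m + 1 ≤ m') hn0.le]
        have h2 : ((t + n*m) + 1)*p ≤ (t + n*m')*p := mul_le_mul_of_nonneg_right h1 hp0.le
        linarith
      · have h1 : (t + n*m') + 1 ≤ t + n*m := by
          nlinarith [mul_le_mul_of_nonneg_left (by linarith : m' + 1 ≤ m) hn0.le]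
        have h2 : ((t + n*m') + 1)*p ≤ (t + n*m)*p := mul_le_mul_of_nonneg_right h1 hp0.le
        linarith
    subst hmm
    have hnk : n * k = n * k' := by linarith [heq]
    have hkk : k = k' := mul_left_cancel₀ (ne_of_gt hn0) hnk
    rw [hkk]
  have hcard := Finset.card_le_card_of_injOn _ main hinj
  have hScard : (Finset.Ico (0:ℤ) A ×ˢ Finset.Ico (0:ℤ) B).card = A.toNat * B.toNat := by
    rw [Finset.card_product, Int.card_Ico, Int.card_Ico, sub_zero, sub_zero]
  rw [hScard] at hcard
  have hAB : A * B ≤ (((Finset.Icc 1 (p - 1)).filter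
      (fun x => x % n = i ∧ ((C * x) % p) % n = j)).card : ℤ) := by
    calc A * B = ((A.toNat * B.toNat : ℕ) : ℤ) := by
          push_cast
          rw [Int.toNat_of_nonneg (by linarith), Int.toNat_of_nonneg (by linarith)]
      _ ≤ _ := by exact_mod_cast hcard
  have h1 := aux_div C n hn0 hC1
  have h2 := aux_div p (n*C) hd0 hCn'
  rw [← hAdef] at h1
  rw [← hBdef] at h2
  have hkey : (C+1)*(p+1) ≤ (2*n*A) * (2*(n*C)*B) :=
    mul_le_mul h1 h2 (by linarith) (by linarith)
  have hfinal : C * p < C * (4*n^2*(A*B)) := by nlinarith [hkey]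
  have hlt : p < 4*n^2*(A*B) := lt_of_mul_lt_mul_left hfinal hC0.le
  have hmono : 4*n^2*(A*B) ≤ 4*n^2*(((Finset.Icc 1 (p - 1)).filter
      (fun x => x % n = i ∧ ((C * x) % p) % n = j)).card : ℤ) :=
    mul_le_mul_of_nonneg_left hAB (by positivity)
  linarith
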